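/- Let p ∈ (0,1), let L be a positive integer with L ≥ 4/p, and set ρ = 1 - 7/(pL²). Let f₁ be a complex polynomial with |f₁(0)| ≥ e^{-Bm^a} and sup_{|z|≤1} |f₁(z)| ≤ e^{Bm^a}. Define F(z) = Π_{a=1}^{L} f₁(z·e^{2πi a/L}). Then there exists z ∈ ρ·γ(L) (i.e. z = ρe^{iθ}, |θ| ≤ π/L) with |f₁(z)| ≥ e^{-3B m^a L}. -/

import Mathlib

open Real Complex Polynomial

/-- Maximum-modulus rotation trick: if `|f₁(0)| ≥ e^{-Bm^a}` and `|f₁| ≤ e^{Bm^a}` on the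
closed unit disk, then for `L ≥ 4/p` and `ρ = 1 - 7/(pL²)` there is a point
`z = ρe^{iθ}` with `|θ| ≤ π/L` where `|f₁(z)| ≥ e^{-3Bm^a L}`. -/
theorem stmt_11 (p : ℝ) (hp0 : 0 < p) (hp1 : p < 1) (L : ℕ) (hL : 4 / p ≤ (L : ℝ))
    (B a : ℝ) (hB : 0 ≤ B) (m : ℕ) (hm : 1 ≤ m) (f₁ : Polynomial ℂ)
    (h0 : Real.exp (-B * (m : ℝ) ^ a) ≤ ‖f₁.eval 0‖)
    (hsup : ∀ z : ℂ, ‖z‖ ≤ 1 → ‖f₁.eval z‖ ≤ Real.exp (B * (m : ℝ) ^ a)) :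
    ∃ z : ℂ,
      (∃ θ : ℝ, |θ| ≤ π / L ∧
          z = ((1 - 7 / (p * (L : ℝ) ^ 2) : ℝ) : ℂ) * Complex.exp (θ * Complex.I)) ∧
      Real.exp (-3 * B * (m : ℝ) ^ a * L) ≤ ‖f₁.eval z‖ := by
  -- basic numerics
  have h4L : (4:ℝ) < L :=
    lt_of_lt_of_le (by nlinarith [div_lt_div_of_pos_left (by norm_num : (0:ℝ) < 4) hp0 hp1]) hL
  have hL0 : 0 < L := by exact_mod_cast (by linarith : (0:ℝ) < L)
  have hL5 : 5 ≤ L := by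
    by_contra h
    interval_cases L <;> simp_all <;> linarith
  have hL5R : (5:ℝ) ≤ L := by exact_mod_cast hL5
  have hpL : 4 ≤ p * L := by
    rw [div_le_iff₀ hp0] at hL; linarith [hL]
  have hpL2 : 20 ≤ p * (L:ℝ)^2 := by nlinarith
  set ρ : ℝ := 1 - 7 / (p * (L:ℝ)^2) with hρdef
  have hρ0 : 0 < ρ := by
    have : 7 / (p * (L:ℝ)^2) ≤ 7/20 := by
      apply div_le_div_of_nonneg_left (by norm_num) (by norm_num) hpL2
    simp only [hρdef]; linarith
  have hρ1 : ρ < 1 := by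
    have : 0 < 7 / (p * (L:ℝ)^2) := by positivity
    simp only [hρdef]; linarith
  set Bm := B * (m:ℝ)^a with hBmdef
  have hBm : 0 ≤ Bm := by
    apply mul_nonneg hB
    positivity
  haveI : NeZero L := ⟨hL0.ne'⟩
  -- the rotation
  set ω : ℂ := Complex.exp ((2 * π / L : ℝ) * Complex.I) with hωdef
  have hωabs1 : ‖ω‖ = 1 := by
    rw [hωdef]
    exact Complex.norm_exp_ofReal_mul_I _
  have hω0 : ω ≠ 0 := by
    intro h; rw [h, norm_zero] at hωabs1; norm_num at hωabs1
  have hωabs : ∀ n : ℕ, ‖ω ^ n‖ = 1 := by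
    intro n
    rw [norm_pow, hωabs1, one_pow]
  have hωL : ω ^ L = 1 := by
    rw [hωdef, ← Complex.exp_nat_mul]
    rw [show (L:ℂ) * (((2 * π / L : ℝ)) * Complex.I) = (2 * π) * Complex.I by
      push_cast
      have : (L:ℂ) ≠ 0 := by exact_mod_cast Nat.cast_ne_zero.mpr hL0.ne'
      field_simp]
    exact Complex.exp_two_pi_mul_I
  have hmod : ∀ k : ℕ, ω ^ (k % L) = ω ^ k := by
    intro k
    conv_rhs => rw [← Nat.mod_add_div k L, pow_add, pow_mul, hωL, one_pow, mul_one]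
  haveI : Fact (1 < L) := ⟨by omega⟩
  -- the product function
  set G : ℂ → ℂ := fun z => ∏ b : ZMod L, f₁.eval (z * ω ^ (b.val)) with hGdef
  have hGdiff : Differentiable ℂ G := by
    apply Differentiable.fun_finsetProd
    intro b _
    exact f₁.differentiable.comp (differentiable_id.mul_const _)
  -- rotation invariance
  have hrot1 : ∀ z : ℂ, G (z * ω) = G z := by
    intro z
    have hstep : ∀ b : ZMod L, f₁.eval ((z * ω) * ω ^ (b.val)) =
        f₁.eval (z * ω ^ ((b + 1 : ZMod L).val)) := by
      intro b
      have hval : (b + 1 : ZMod L).val = (b.val + 1) % L := by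
        rw [ZMod.val_add, ZMod.val_one]
      rw [hval, hmod, pow_succ]
      congr 1; ring
    simp only [hGdef]
    calc ∏ b : ZMod L, f₁.eval ((z * ω) * ω ^ (b.val))
        = ∏ b : ZMod L, f₁.eval (z * ω ^ ((b + 1 : ZMod L).val)) :=
          Finset.prod_congr rfl (fun b _ => hstep b)
      _ = ∏ b : ZMod L, f₁.eval (z * ω ^ (b.val)) := by
          simpa using Equiv.prod_comp (Equiv.addRight (1 : ZMod L))
            (fun c : ZMod L => f₁.eval (z * ω ^ (c.val)))
  have hrotn : ∀ (n : ℕ) (z : ℂ), G (z * ω ^ n) = G z := by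
    intro n
    induction n with
    | zero => simp
    | succ n ih => intro z; rw [pow_succ, ← mul_assoc, hrot1, ih]
  -- maximum modulus
  obtain ⟨w, hwf, hwmax⟩ := Complex.exists_mem_frontier_isMaxOn_norm
    (Metric.isBounded_ball (x := (0:ℂ)) (r := ρ)) (Metric.nonempty_ball.2 hρ0)
    (hGdiff.diffContOnCl)
  rw [frontier_ball (0:ℂ) hρ0.ne'] at hwf
  rw [closure_ball (0:ℂ) hρ0.ne'] at hwmax
  have hwabs : ‖w‖ = ρ := by
    simpa using mem_sphere_zero_iff_norm.1 hwf
  have hG0w : ‖G 0‖ ≤ ‖G w‖ :=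
    hwmax (Metric.mem_closedBall.2 (by simp [hρ0.le]))
  -- choose the angle
  set φ : ℝ := w.arg with hφdef
  set k : ℤ := round (φ * L / (2 * π)) with hkdef
  set θ : ℝ := φ - 2 * π * k / L with hθdef
  have hπ0 : 0 < π := Real.pi_pos
  have hθle : |θ| ≤ π / L := by
    have h1 : |φ * L / (2 * π) - k| ≤ 1/2 := abs_sub_round _
    have hθeq : θ = (2 * π / L) * (φ * L / (2 * π) - k) := by
      rw [hθdef]; field_simp
    rw [hθeq, abs_mul, abs_of_pos (by positivity : (0:ℝ) < 2 * π / L)]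
    calc 2 * π / L * |φ * L / (2 * π) - k| ≤ 2 * π / L * (1/2) := by
          apply mul_le_mul_of_nonneg_left h1 (by positivity)
      _ = π / L := by ring
  set z : ℂ := (ρ : ℂ) * Complex.exp (θ * Complex.I) with hzdef
  -- z rotated back is w
  have hωz : ∀ j : ℤ, ω ^ j = Complex.exp ((2 * π * j / L : ℝ) * Complex.I) := by
    intro j
    rw [hωdef, ← Complex.exp_int_mul]
    congr 1
    push_cast
    have : (L:ℂ) ≠ 0 := by exact_mod_cast Nat.cast_ne_zero.mpr hL0.ne'
    field_simp
  have hw_eq : w = z * ω ^ k := by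
    rw [hzdef, hωz k]
    rw [mul_assoc, ← Complex.exp_add, ← Complex.norm_mul_exp_arg_mul_I w, hwabs]
    congr 1
    have harg : θ + 2 * π * (k:ℝ) / L = w.arg := by rw [hθdef, hφdef]; ring
    rw [← add_mul, ← Complex.ofReal_add, harg]
  -- reduce integer power to natural power
  have hωint : ∀ j : ℤ, ∃ n : ℕ, ω ^ j = ω ^ n := by
    intro j
    refine ⟨(j % L).toNat, ?_⟩
    have hjL : (0:ℤ) ≤ j % L := Int.emod_nonneg j (by exact_mod_cast hL0.ne')
    rw [← zpow_natCast, Int.toNat_of_nonneg hjL]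
    conv_lhs => rw [← Int.emod_add_mul_ediv j L]
    rw [zpow_add₀ hω0, zpow_mul]
    have : ω ^ (L:ℤ) = 1 := by rw [zpow_natCast, hωL]
    rw [this, one_zpow, mul_one]
  obtain ⟨n, hn⟩ := hωint k
  have hGwz : ‖G w‖ = ‖G z‖ := by rw [hw_eq, hn, hrotn]
  -- lower bound on ‖G 0‖
  have hG0 : Real.exp (-Bm) ^ L ≤ ‖G 0‖ := by
    have : G 0 = (f₁.eval 0) ^ L := by
      simp only [hGdef, zero_mul, Finset.prod_const, Finset.card_univ, ZMod.card]
    rw [this, norm_pow]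
    exact pow_le_pow_left₀ (Real.exp_nonneg _) (by rw [hBmdef, ← neg_mul]; exact h0) L
  -- upper bound: extract the a = 0 factor
  have hzabs : ‖z‖ = ρ := by
    rw [hzdef]
    simp [map_mul, Complex.norm_exp_ofReal_mul_I, abs_of_pos hρ0]
  have hfac : ‖G z‖ ≤ ‖f₁.eval z‖ * Real.exp Bm ^ (L - 1) := by
    have h00 : G z = f₁.eval z * ∏ b ∈ Finset.univ.erase (0 : ZMod L),
        f₁.eval (z * ω ^ (b.val)) := by
      simp only [hGdef]
      rw [← Finset.mul_prod_erase Finset.univ _ (Finset.mem_univ (0 : ZMod L))]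
      simp
    rw [h00, norm_mul]
    apply mul_le_mul_of_nonneg_left _ (norm_nonneg _)
    rw [norm_prod]
    calc ∏ b ∈ Finset.univ.erase (0 : ZMod L), ‖f₁.eval (z * ω ^ (b.val))‖
        ≤ ∏ _b ∈ Finset.univ.erase (0 : ZMod L), Real.exp Bm := by
          apply Finset.prod_le_prod (fun _ _ => norm_nonneg _)
          intro b _
          apply hsup
          rw [norm_mul, hzabs, hωabs, mul_one]
          exact hρ1.le
      _ = Real.exp Bm ^ (L - 1) := by
          rw [Finset.prod_const]
          congr 1
          rw [Finset.card_erase_of_mem (Finset.mem_univ _), Finset.card_univ, ZMod.card]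
  -- put it together
  refine ⟨z, ⟨θ, hθle, by rw [hzdef]⟩, ?_⟩
  have hLm1 : ((L - 1 : ℕ) : ℝ) = (L:ℝ) - 1 := by
    rw [Nat.cast_sub hL0]; norm_num
  have hGz : Real.exp (-Bm * L) ≤ ‖f₁.eval z‖ * Real.exp (Bm * ((L:ℝ) - 1)) := by
    calc Real.exp (-Bm * L) = Real.exp (-Bm) ^ L := by
          rw [← Real.exp_nat_mul]; ring_nf
      _ ≤ ‖G 0‖ := hG0
      _ ≤ ‖G w‖ := hG0w
      _ = ‖G z‖ := hGwz
      _ ≤ ‖f₁.eval z‖ * Real.exp Bm ^ (L - 1) := hfac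
      _ = ‖f₁.eval z‖ * Real.exp (Bm * ((L:ℝ) - 1)) := by
          rw [← Real.exp_nat_mul, hLm1, mul_comm (((L:ℝ)) - 1)]
  have key : Real.exp (-3 * Bm * L) * Real.exp (Bm * ((L:ℝ) - 1)) ≤
      ‖f₁.eval z‖ * Real.exp (Bm * ((L:ℝ) - 1)) := by
    refine le_trans ?_ hGz
    rw [← Real.exp_add]
    apply Real.exp_le_exp.2
    nlinarith
  have := le_of_mul_le_mul_right key (Real.exp_pos _)
  calc Real.exp (-3 * B * (m:ℝ)^a * L) = Real.exp (-3 * Bm * L) := by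
        rw [hBmdef]; ring_nf
    _ ≤ ‖f₁.eval z‖ := this
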